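/- Let p ≡ 3 (mod 4) be a prime. Then the Legendre symbol (R_p/p) equals (−1)^{(p−3)/4}. -/

import Mathlib

open Finset

namespace Stmt7Aux

variable {p : ℕ} [hp : Fact p.Prime]

lemma prod_pm_of_sum_eq_zero (s : Finset ℕ) (f : ℕ → ℤ)
    (h1 : ∀ a ∈ s, f a = 1 ∨ f a = -1) (h0 : ∑ a ∈ s, f a = 0) :
    ∏ a ∈ s, f a = (-1) ^ (s.card / 2) := by
  classical
  set t := s.filter (fun a => f a = -1) with ht
  have hst : t ⊆ s := Finset.filter_subset _ _
  have hmem : ∀ a ∈ s \ t, f a = 1 := by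
    intro a ha
    have has : a ∈ s := (Finset.mem_sdiff.mp ha).1
    have hat : a ∉ t := (Finset.mem_sdiff.mp ha).2
    rcases h1 a has with h | h
    · exact h
    · exact absurd (Finset.mem_filter.mpr ⟨has, h⟩) hat
  have hsum1 : ∑ a ∈ t, f a = -(t.card : ℤ) := by
    rw [Finset.sum_congr rfl (fun a ha => (Finset.mem_filter.mp ha).2)]
    simp [ht]
  have hsum2 : ∑ a ∈ s \ t, f a = ((s \ t).card : ℤ) := by
    rw [Finset.sum_congr rfl hmem]; simp
  have hcards : (s \ t).card = s.card - t.card := Finset.card_sdiff_of_subset hst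
  have htle : t.card ≤ s.card := Finset.card_le_card hst
  have hkey : s.card = 2 * t.card := by
    have h2 := (Finset.sum_sdiff hst (f := f)).symm
    rw [h0, hsum1, hsum2, hcards] at h2
    have h3 : ((s.card - t.card : ℕ) : ℤ) = t.card := by linarith
    have h4 := Nat.cast_inj (R := ℤ) |>.mp h3
    omega
  have hprod1 : ∏ a ∈ t, f a = (-1 : ℤ) ^ t.card := by
    rw [Finset.prod_congr rfl (fun a ha => (Finset.mem_filter.mp ha).2)]
    simp [ht]
  have hprod2 : ∏ a ∈ s \ t, f a = 1 := by
    rw [Finset.prod_congr rfl hmem]; simp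
  have hdiv : s.card / 2 = t.card := by omega
  rw [← Finset.prod_sdiff hst, hprod1, hprod2, one_mul, hdiv]

lemma factorial_ne_zero_zmod {m : ℕ} (hm : m < p) : ((m.factorial : ℕ) : ZMod p) ≠ 0 := by
  rw [Ne, ZMod.natCast_eq_zero_iff]
  intro h
  exact absurd ((Nat.Prime.dvd_factorial hp.out).mp h) (by omega)

lemma factorial_reflect (k : ℕ) (hk : k ≤ p - 1) :
    (((p - 1 - k).factorial : ℕ) : ZMod p) * ((k.factorial : ℕ) : ZMod p) = (-1) ^ (k + 1) := by
  induction k with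
  | zero => simpa using ZMod.wilsons_lemma p
  | succ k ih =>
    have hk' : k ≤ p - 1 := by omega
    have hp2 : 2 ≤ p := hp.out.two_le
    have hsplit : (p - 1 - k).factorial = (p - 1 - k) * (p - 1 - (k+1)).factorial := by
      have h5 : p - 1 - k = (p - 1 - (k+1)) + 1 := by omega
      rw [h5, Nat.factorial_succ]
    have hcast : ((p - 1 - k : ℕ) : ZMod p) = -((k : ZMod p)+1) := by
      have h1 : ((p : ℕ) : ZMod p) = 0 := ZMod.natCast_self p
      have h2 : (p - 1 - k) + (k + 1) = p := by omega
      have h6 := congrArg (fun x : ℕ => (x : ZMod p)) h2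
      push_cast at h6
      linear_combination h6 + h1
    have ihs := ih hk'
    rw [hsplit] at ihs
    push_cast [Nat.factorial_succ] at ihs ⊢
    rw [hcast] at ihs
    rw [pow_succ ((-1 : ZMod p)) (k+1)]
    linear_combination (-1 : ZMod p) * ihs

lemma natCast_eq_neg_of_add_eq {a b : ℕ} (h : a + b = p) : ((a : ℕ) : ZMod p) = -(b : ZMod p) := by
  have h1 : ((p : ℕ) : ZMod p) = 0 := ZMod.natCast_self p
  have h6 := congrArg (fun x : ℕ => (x : ZMod p)) h
  push_cast at h6
  linear_combination h6 + h1

lemma natCast_ne_zero_zmod {a : ℕ} (h1 : 0 < a) (h2 : a < p) : ((a : ℕ) : ZMod p) ≠ 0 := by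
  rw [Ne, ZMod.natCast_eq_zero_iff]
  intro h
  exact absurd (Nat.le_of_dvd h1 h) (by omega)

lemma sum_parity_split (f : ℕ → ℤ) (m : ℕ) :
    ∑ a ∈ Ioc 0 (2*m+1), f a = (∑ t ∈ Ioc 0 m, f (2*t)) + ∑ u ∈ Icc 0 m, f (2*u+1) := by
  induction m with
  | zero =>
    rw [show 2*0+1 = 0+1 from rfl, Finset.sum_Ioc_succ_top (Nat.zero_le 0), Finset.Ioc_self]
    simp
  | succ m ih =>
    have e1 : 2*(m+1)+1 = (2*m+2)+1 := by ring
    have e2 : 2*m+2 = (2*m+1)+1 := by ring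
    rw [e1, Finset.sum_Ioc_succ_top (by omega), e2, Finset.sum_Ioc_succ_top (by omega), ih,
      Finset.sum_Ioc_succ_top (Nat.zero_le _), Finset.sum_Icc_succ_top (Nat.zero_le _)]
    rw [show 2*(m+1) = 2*m+1+1 by ring, show 2*m+1+1+1 = 2*(m+1)+1 by ring]
    ring

section QC

variable {M : ℕ}

lemma qc_neg_one (hpM : p = 4*M+3) : quadraticChar (ZMod p) (-1 : ZMod p) = -1 := by
  have hchar2 : ringChar (ZMod p) ≠ 2 := by
    rw [ZMod.ringChar_zmod_n]; omega
  rw [quadraticChar_neg_one hchar2, ZMod.card p, ZMod.χ₄_nat_eq_if_mod_four]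
  have h1 : p % 4 = 3 := by omega
  have h2 : p % 2 = 1 := by omega
  simp [h1, h2]

lemma qc_two (hpM : p = 4*M+3) :
    quadraticChar (ZMod p) (2 : ZMod p) = if M % 2 = 0 then -1 else 1 := by
  have hchar2 : ringChar (ZMod p) ≠ 2 := by
    rw [ZMod.ringChar_zmod_n]; omega
  rw [quadraticChar_two hchar2, ZMod.card p, ZMod.χ₈_nat_eq_if_mod_eight]
  have h2 : p % 2 = 1 := by omega
  rcases Nat.even_or_odd M with hM | hM
  · have hM2 : M % 2 = 0 := Nat.even_iff.mp hM
    have h8 : p % 8 = 3 := by omega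
    simp [h2, h8, hM2]
  · have hM2 : M % 2 = 1 := Nat.odd_iff.mp hM
    have h8 : p % 8 = 7 := by omega
    simp [h2, h8, hM2]

lemma qc_sums (hpM : p = 4*M+3) :
    (M % 2 = 0 → ∑ a ∈ Ioc 0 M, quadraticChar (ZMod p) ((a : ℕ) : ZMod p) = 0)
    ∧ (M % 2 = 1 → ∑ u ∈ Icc 0 M, quadraticChar (ZMod p) (((2*u+1 : ℕ)) : ZMod p) = 0) := by
  set Qc := quadraticChar (ZMod p) with hQc
  set S1 := ∑ a ∈ Ioc 0 M, Qc ((a : ℕ) : ZMod p) with hS1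
  set S2 := ∑ a ∈ Ioc M (2*M+1), Qc ((a : ℕ) : ZMod p) with hS2
  set So := ∑ u ∈ Icc 0 M, Qc (((2*u+1 : ℕ)) : ZMod p) with hSo
  have hsplit : S1 + S2 = (∑ t ∈ Ioc 0 M, Qc (((2*t : ℕ)) : ZMod p)) + So := by
    rw [hS1, hS2, hSo]
    rw [Finset.sum_Ioc_consecutive _ (Nat.zero_le M) (by omega)]
    exact sum_parity_split (fun a => Qc ((a : ℕ) : ZMod p)) M
  have heven : ∑ t ∈ Ioc 0 M, Qc (((2*t : ℕ)) : ZMod p) = Qc 2 * S1 := by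
    rw [hS1, Finset.mul_sum]
    refine Finset.sum_congr rfl fun t ht => ?_
    push_cast
    rw [map_mul]
  have hodd : So = -(Qc 2 * S2) := by
    rw [hS2, Finset.mul_sum, ← Finset.sum_neg_distrib]
    refine Finset.sum_nbij' (i := fun u => 2*M+1-u) (j := fun a => 2*M+1-a) ?_ ?_ ?_ ?_ ?_
    · intro u hu; simp only [Finset.mem_Icc, Finset.mem_Ioc] at *; omega
    · intro a ha; simp only [Finset.mem_Icc, Finset.mem_Ioc] at *; omega
    · intro u hu; simp only [Finset.mem_Icc] at hu; omega
    · intro a ha; simp only [Finset.mem_Ioc] at ha; omega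
    · intro u hu
      simp only [Finset.mem_Icc] at hu
      have key : ((2*(2*M+1-u) : ℕ) : ZMod p) = -(((2*u+1 : ℕ)) : ZMod p) :=
        natCast_eq_neg_of_add_eq (by omega)
      have hneg : Qc (((2*(2*M+1-u) : ℕ)) : ZMod p) = -Qc (((2*u+1 : ℕ)) : ZMod p) := by
        rw [key, ← neg_one_mul, map_mul, qc_neg_one hpM]; ring
      have h7 : Qc 2 * Qc (((2*M+1-u : ℕ)) : ZMod p) = Qc (((2*(2*M+1-u) : ℕ)) : ZMod p) := by
        rw [← map_mul]; congr 1; push_cast; ring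
      rw [h7, hneg, neg_neg]
  constructor
  · intro hM
    have h2v : Qc 2 = -1 := by rw [qc_two hpM]; simp [hM]
    have := hsplit
    rw [heven, hodd, h2v] at this
    have hS1z : S1 = 0 := by linarith
    exact hS1z
  · intro hM
    have h2v : Qc 2 = 1 := by rw [qc_two hpM]; simp [hM]
    have := hsplit
    rw [heven, hodd, h2v] at this
    have hS2z : S2 = 0 := by linarith
    have : So = -(Qc 2 * S2) := hodd
    rw [h2v, hS2z] at this
    simpa using this

end QC

lemma choose_reflect {n k : ℕ} (hpn : p = 2 * n + 1) (hodd : n % 2 = 1) (hk1 : 1 ≤ k) (hkn : k ≤ n) :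
    (((2 * n - k).choose n : ℕ) : ZMod p) = - (((n + k).choose k : ℕ) : ZMod p) := by
  have hA : (2*n - k).choose n * n.factorial * (2*n - k - n).factorial = (2*n - k).factorial :=
    Nat.choose_mul_factorial_mul_factorial (by omega)
  have hnk : 2*n - k - n = n - k := by omega
  rw [hnk] at hA
  have hB : (n + k).choose k * k.factorial * (n + k - k).factorial = (n + k).factorial :=
    Nat.choose_mul_factorial_mul_factorial (by omega)
  have hnk2 : n + k - k = n := by omega
  rw [hnk2] at hB
  have W1 := factorial_reflect (p := p) k (by omega)
  have W2 := factorial_reflect (p := p) (n - k) (by omega)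
  have e1 : p - 1 - k = 2*n - k := by omega
  have e2 : p - 1 - (n - k) = n + k := by omega
  rw [e1] at W1
  rw [e2] at W2
  -- parity: (-1)^(k+1) = -(-1)^(n-k+1)
  have hpar : ((-1 : ZMod p)) ^ (k+1) = -((-1 : ZMod p)) ^ (n-k+1) := by
    have h3 : (k+1) + (n-k+1) = n + 2 := by omega
    have h4 : ((-1 : ZMod p)) ^ (k+1) * ((-1 : ZMod p)) ^ (n-k+1) = -1 := by
      rw [← pow_add, h3]
      exact Odd.neg_one_pow (Nat.odd_iff.mpr (by omega))
    have hsq : ((-1 : ZMod p)) ^ (n-k+1) * ((-1 : ZMod p)) ^ (n-k+1) = 1 := by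
      rw [← pow_add]
      exact Even.neg_one_pow (Nat.even_iff.mpr (by omega))
    calc ((-1 : ZMod p)) ^ (k+1)
        = ((-1 : ZMod p)) ^ (k+1) * (((-1 : ZMod p)) ^ (n-k+1) * ((-1 : ZMod p)) ^ (n-k+1)) := by
          rw [hsq, mul_one]
      _ = -((-1 : ZMod p)) ^ (n-k+1) := by rw [← mul_assoc, h4]; ring
  -- cast identities
  have cA := congrArg (fun x : ℕ => (x : ZMod p)) hA
  have cB := congrArg (fun x : ℕ => (x : ZMod p)) hB
  push_cast at cA cB
  set a := (((2*n - k).choose n : ℕ) : ZMod p)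
  set b := (((n + k).choose k : ℕ) : ZMod p)
  have hU : ((n.factorial : ℕ) : ZMod p) * ((n - k).factorial : ZMod p) * ((k.factorial : ℕ) : ZMod p) ≠ 0 := by
    apply mul_ne_zero
    apply mul_ne_zero
    · exact factorial_ne_zero_zmod (by omega)
    · exact factorial_ne_zero_zmod (by omega)
    · exact factorial_ne_zero_zmod (by omega)
  apply mul_right_cancel₀ hU
  calc a * (((n.factorial : ℕ) : ZMod p) * ((n - k).factorial : ZMod p) * ((k.factorial : ℕ) : ZMod p))
      = ((2*n - k).factorial : ZMod p) * ((k.factorial : ℕ) : ZMod p) := by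
        rw [← cA]; ring
    _ = (-1) ^ (k+1) := W1
    _ = -((-1 : ZMod p)) ^ (n-k+1) := hpar
    _ = -(((n + k).factorial : ZMod p) * ((n - k).factorial : ZMod p)) := by rw [W2]
    _ = -b * (((n.factorial : ℕ) : ZMod p) * ((n - k).factorial : ZMod p) * ((k.factorial : ℕ) : ZMod p)) := by
        rw [← cB]; ring

lemma sum_pow_zmod {m : ℕ} (h1 : 1 ≤ m) (h2 : m < 2 * (p - 1)) :
    ∑ x : ZMod p, x ^ m = if m = p - 1 then -1 else 0 := by
  classical
  have hcard : Fintype.card (ZMod p) = p := ZMod.card p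
  have husum := FiniteField.sum_pow_units (ZMod p) m
  rw [hcard] at husum
  let φ : (ZMod p)ˣ ↪ ZMod p := ⟨fun x => x, Units.val_injective⟩
  have himg : univ.map φ = univ \ {0} := by
    ext x
    simp only [mem_map, mem_univ, Function.Embedding.coeFn_mk, true_and, mem_sdiff,
      mem_singleton, φ]
    exact isUnit_iff_ne_zero (a := x)
  have hsum : ∑ x : ZMod p, x ^ m = ∑ u : (ZMod p)ˣ, ((u : ZMod p)) ^ m := by
    calc ∑ x : ZMod p, x ^ m = ∑ x ∈ univ \ {(0 : ZMod p)}, x ^ m := by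
          rw [← Finset.sum_sdiff (({0} : Finset (ZMod p)).subset_univ), Finset.sum_singleton,
            zero_pow (by omega), add_zero]
      _ = ∑ u : (ZMod p)ˣ, ((u : ZMod p)) ^ m := by
          rw [← himg, Finset.sum_map]
          simp [φ]
  rw [hsum, husum]
  have hdvd : (p - 1 ∣ m) ↔ m = p - 1 := by
    constructor
    · intro hd
      have hp2 : 2 ≤ p := hp.out.two_le
      have hle : p - 1 ≤ m := Nat.le_of_dvd (by omega) hd
      have hd2 : (p-1) ∣ (m - (p-1)) := Nat.dvd_sub hd dvd_rfl
      have hz := Nat.eq_zero_of_dvd_of_lt hd2 (by omega)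
      omega
    · rintro rfl; exact dvd_refl _
  simp only [hdvd]

lemma qc_choose_prod {n : ℕ} (hpn : p = 2*n+1) (k : ℕ) (hk : k ≤ n) :
    quadraticChar (ZMod p) (((n+k).choose k : ℕ) : ZMod p)
      = ∏ i ∈ Ioc 0 k,
          (quadraticChar (ZMod p) ((n+i : ℕ) : ZMod p) * quadraticChar (ZMod p) ((i : ℕ) : ZMod p)) := by
  induction k with
  | zero => simp
  | succ k ih =>
    have hid : (n+k+1) * ((n+k).choose k) = (n+k+1).choose (k+1) * (k+1) := by
      simpa using Nat.add_one_mul_choose_eq (n+k) k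
    have hcast := congrArg (fun x : ℕ => (x : ZMod p)) hid
    push_cast at hcast
    set Qc := quadraticChar (ZMod p) with hQc
    have happ := congrArg Qc hcast
    rw [map_mul, map_mul] at happ
    have hk1ne : ((k : ZMod p) + 1) ≠ 0 := by
      have := natCast_ne_zero_zmod (p := p) (a := k+1) (by omega) (by omega)
      push_cast at this
      exact this
    have hsq : Qc ((k : ZMod p) + 1) * Qc ((k : ZMod p) + 1) = 1 := by
      have := quadraticChar_sq_one hk1ne
      rwa [pow_two] at this
    rw [Finset.prod_Ioc_succ_top (Nat.zero_le _), ← ih (by omega)]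
    rw [show n+(k+1) = n+k+1 from by ring]
    push_cast
    linear_combination (- Qc ((k : ZMod p) + 1)) * happ
      + (- Qc ((((n+k+1).choose (k+1) : ℕ)) : ZMod p)) * hsq

lemma qc_main {M n : ℕ} (hpM : p = 4*M+3) (hn : n = 2*M+1) :
    ∏ k ∈ Ioc 0 M, quadraticChar (ZMod p) (((2*n - k).choose n : ℕ) : ZMod p) = (-1)^M := by
  set Qc := quadraticChar (ZMod p) with hQc
  have hpn : p = 2*n+1 := by omega
  have hodd : n % 2 = 1 := by omega
  have hqc_ne : ∀ a : ℕ, 0 < a → a < p → (Qc ((a : ℕ) : ZMod p) = 1 ∨ Qc ((a : ℕ) : ZMod p) = -1) :=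
    fun a h1 h2 => quadraticChar_dichotomy (natCast_ne_zero_zmod h1 h2)
  have hqc_sq : ∀ a : ℕ, 0 < a → a < p → Qc ((a : ℕ) : ZMod p) * Qc ((a : ℕ) : ZMod p) = 1 := by
    intro a h1 h2
    have := quadraticChar_sq_one (natCast_ne_zero_zmod (p := p) h1 h2)
    rwa [pow_two] at this
  -- the pair function
  set q : ℕ → ℤ := fun i => Qc ((n+i : ℕ) : ZMod p) * Qc ((i : ℕ) : ZMod p) with hq
  have hq_sq : ∀ i, 0 < i → i ≤ M → q i * q i = 1 := by
    intro i h1 h2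
    have e1 := hqc_sq (n+i) (by omega) (by omega)
    have e2 := hqc_sq i (by omega) (by omega)
    calc q i * q i = (Qc ((n+i : ℕ) : ZMod p) * Qc ((n+i : ℕ) : ZMod p))
          * (Qc ((i : ℕ) : ZMod p) * Qc ((i : ℕ) : ZMod p)) := by rw [hq]; ring
      _ = 1 := by rw [e1, e2, mul_one]
  -- Step 1: reflection of each factor
  have h1 : ∏ k ∈ Ioc 0 M, Qc (((2*n - k).choose n : ℕ) : ZMod p)
      = (-1)^M * ∏ k ∈ Ioc 0 M, Qc (((n+k).choose k : ℕ) : ZMod p) := by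
    calc ∏ k ∈ Ioc 0 M, Qc (((2*n-k).choose n : ℕ) : ZMod p)
        = ∏ k ∈ Ioc 0 M, ((-1) * Qc (((n+k).choose k : ℕ) : ZMod p)) := by
          refine Finset.prod_congr rfl fun k hk => ?_
          simp only [Finset.mem_Ioc] at hk
          rw [choose_reflect hpn hodd (by omega) (by omega), ← neg_one_mul, map_mul,
            qc_neg_one hpM]
      _ = (-1)^M * ∏ k ∈ Ioc 0 M, Qc (((n+k).choose k : ℕ) : ZMod p) := by
          rw [Finset.prod_mul_distrib, Finset.prod_const, Nat.card_Ioc, Nat.sub_zero]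
  -- Step 2: expand each choose
  have h2 : ∏ k ∈ Ioc 0 M, Qc (((n+k).choose k : ℕ) : ZMod p)
      = ∏ k ∈ Ioc 0 M, ∏ i ∈ Ioc 0 k, q i :=
    Finset.prod_congr rfl fun k hk => by
      have hk' : k ≤ M := (Finset.mem_Ioc.mp hk).2
      exact qc_choose_prod hpn k (by omega)
  -- Step 3: swap to powers
  have h3 : ∏ k ∈ Ioc 0 M, ∏ i ∈ Ioc 0 k, q i = ∏ i ∈ Ioc 0 M, q i ^ (M+1-i) := by
    have inner : ∀ k ∈ Ioc 0 M, ∏ i ∈ Ioc 0 k, q i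
        = ∏ i ∈ Ioc 0 M, (if i ≤ k then q i else 1) := by
      intro k hk
      simp only [Finset.mem_Ioc] at hk
      rw [Finset.prod_ite, Finset.prod_const_one, mul_one]
      apply Finset.prod_congr _ (fun _ _ => rfl)
      ext a
      simp only [Finset.mem_Ioc, Finset.mem_filter]
      omega
    rw [Finset.prod_congr rfl inner, Finset.prod_comm]
    refine Finset.prod_congr rfl fun i hi => ?_
    simp only [Finset.mem_Ioc] at hi
    rw [Finset.prod_ite, Finset.prod_const_one, mul_one, Finset.prod_const]
    have : (Ioc 0 M).filter (fun k => i ≤ k) = Icc i M := by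
      ext a
      simp only [Finset.mem_Ioc, Finset.mem_filter, Finset.mem_Icc]
      omega
    rw [this, Nat.card_Icc]
  -- Step 4: powers reduce via parity
  have h4 : ∏ i ∈ Ioc 0 M, q i ^ (M+1-i)
      = ∏ i ∈ (Ioc 0 M).filter (fun i => i % 2 = M % 2), q i := by
    rw [Finset.prod_filter]
    refine Finset.prod_congr rfl fun i hi => ?_
    simp only [Finset.mem_Ioc] at hi
    have hsq := hq_sq i (by omega) (by omega)
    have hdecomp : M+1-i = 2*((M+1-i)/2) + (M+1-i) % 2 := by omega
    rw [hdecomp, pow_add, pow_mul, pow_two, hsq, one_pow, one_mul]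
    by_cases hpar : i % 2 = M % 2
    · rw [if_pos hpar, show (M+1-i) % 2 = 1 from by omega, pow_one]
    · rw [if_neg hpar, show (M+1-i) % 2 = 0 from by omega, pow_zero]
  rw [h1, h2, h3, h4]
  -- Case split on parity of M
  rcases Nat.even_or_odd M with hM | hM
  · -- M even
    have hM2 : M % 2 = 0 := Nat.even_iff.mp hM
    have hfil : ∏ i ∈ (Ioc 0 M).filter (fun i => i % 2 = M % 2), q i
        = ∏ t ∈ Ioc 0 (M/2), q (2*t) := by
      refine Finset.prod_nbij' (i := fun a => a/2) (j := fun t => 2*t) ?_ ?_ ?_ ?_ ?_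
      · intro a ha; simp only [Finset.mem_filter, Finset.mem_Ioc] at *; omega
      · intro t ht; simp only [Finset.mem_filter, Finset.mem_Ioc] at *; omega
      · intro a ha; simp only [Finset.mem_filter, Finset.mem_Ioc] at ha; omega
      · intro t ht; simp only [Finset.mem_Ioc] at ht; omega
      · intro a ha
        simp only [Finset.mem_filter, Finset.mem_Ioc] at ha
        rw [show 2*(a/2) = a from by omega]
    have hval : ∀ t ∈ Ioc 0 (M/2), q (2*t)
        = (-1) * (Qc ((t : ℕ) : ZMod p) * Qc ((M+1-t : ℕ) : ZMod p)) := by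
      intro t ht
      simp only [Finset.mem_Ioc] at ht
      have key : ((n+2*t : ℕ) : ZMod p) = -((2*(M+1-t) : ℕ) : ZMod p) :=
        natCast_eq_neg_of_add_eq (by omega)
      have e2 : Qc ((n+2*t : ℕ) : ZMod p) = (-1) * Qc ((2*(M+1-t) : ℕ) : ZMod p) := by
        rw [key, ← neg_one_mul, map_mul, qc_neg_one hpM]
      have c1 : ((2*(M+1-t) : ℕ) : ZMod p) = ((2 : ℕ) : ZMod p) * ((M+1-t : ℕ) : ZMod p) := by
        push_cast; ring
      have c2 : ((2*t : ℕ) : ZMod p) = ((2 : ℕ) : ZMod p) * ((t : ℕ) : ZMod p) := by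
        push_cast; ring
      have h2sq := hqc_sq 2 (by omega) (by omega)
      rw [hq]
      dsimp only
      rw [e2, c1, c2, map_mul, map_mul]
      linear_combination (-(Qc ((t : ℕ) : ZMod p) * Qc ((M+1-t : ℕ) : ZMod p))) * h2sq
    rw [hfil, Finset.prod_congr rfl hval, Finset.prod_mul_distrib, Finset.prod_const,
      Nat.card_Ioc, Finset.prod_mul_distrib]
    have hrefl : ∏ t ∈ Ioc 0 (M/2), Qc ((M+1-t : ℕ) : ZMod p)
        = ∏ a ∈ Ioc (M/2) M, Qc ((a : ℕ) : ZMod p) := by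
      refine Finset.prod_nbij' (i := fun t => M+1-t) (j := fun a => M+1-a) ?_ ?_ ?_ ?_ ?_
      · intro t ht; simp only [Finset.mem_Ioc] at *; omega
      · intro a ha; simp only [Finset.mem_Ioc] at *; omega
      · intro t ht; simp only [Finset.mem_Ioc] at ht; omega
      · intro a ha; simp only [Finset.mem_Ioc] at ha; omega
      · intro t ht; rfl
    have hcount : ∏ a ∈ Ioc 0 M, Qc ((a : ℕ) : ZMod p) = (-1 : ℤ)^(M/2) := by
      have := prod_pm_of_sum_eq_zero (Ioc 0 M) (fun a => Qc ((a : ℕ) : ZMod p))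
        (fun a ha => by
          simp only [Finset.mem_Ioc] at ha
          exact hqc_ne a (by omega) (by omega))
        ((qc_sums hpM).1 hM2)
      rwa [Nat.card_Ioc, Nat.sub_zero] at this
    rw [hrefl, Finset.prod_Ioc_consecutive _ (Nat.zero_le _) (by omega), hcount, Nat.sub_zero,
      ← pow_add]
    rw [show ((-1 : ℤ))^(M/2+M/2) = 1 from Even.neg_one_pow ⟨M/2, rfl⟩, mul_one]
  · -- M odd
    have hM2 : M % 2 = 1 := Nat.odd_iff.mp hM
    have hfil : ∏ i ∈ (Ioc 0 M).filter (fun i => i % 2 = M % 2), q i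
        = ∏ t ∈ range ((M+1)/2), q (2*t+1) := by
      refine Finset.prod_nbij' (i := fun a => a/2) (j := fun t => 2*t+1) ?_ ?_ ?_ ?_ ?_
      · intro a ha; simp only [Finset.mem_filter, Finset.mem_Ioc, Finset.mem_range] at *; omega
      · intro t ht; simp only [Finset.mem_filter, Finset.mem_Ioc, Finset.mem_range] at *; omega
      · intro a ha; simp only [Finset.mem_filter, Finset.mem_Ioc] at ha; omega
      · intro t ht; simp only [Finset.mem_range] at ht; omega
      · intro a ha
        simp only [Finset.mem_filter, Finset.mem_Ioc] at ha
        rw [show 2*(a/2)+1 = a from by omega]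
    have hval : ∀ t ∈ range ((M+1)/2), q (2*t+1)
        = (-1) * (Qc ((2*t+1 : ℕ) : ZMod p) * Qc ((2*(M-t)+1 : ℕ) : ZMod p)) := by
      intro t ht
      simp only [Finset.mem_range] at ht
      have key : ((n+(2*t+1) : ℕ) : ZMod p) = -((2*(M-t)+1 : ℕ) : ZMod p) :=
        natCast_eq_neg_of_add_eq (by omega)
      have e2 : Qc ((n+(2*t+1) : ℕ) : ZMod p) = (-1) * Qc ((2*(M-t)+1 : ℕ) : ZMod p) := by
        rw [key, ← neg_one_mul, map_mul, qc_neg_one hpM]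
      rw [hq]
      dsimp only
      rw [e2]
      ring
    rw [hfil, Finset.prod_congr rfl hval, Finset.prod_mul_distrib, Finset.prod_const,
      Finset.card_range, Finset.prod_mul_distrib]
    have hrefl : ∏ t ∈ range ((M+1)/2), Qc ((2*(M-t)+1 : ℕ) : ZMod p)
        = ∏ s ∈ Ico ((M+1)/2) (M+1), Qc ((2*s+1 : ℕ) : ZMod p) := by
      refine Finset.prod_nbij' (i := fun t => M-t) (j := fun s => M-s) ?_ ?_ ?_ ?_ ?_
      · intro t ht; simp only [Finset.mem_range, Finset.mem_Ico] at *; omega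
      · intro s hs; simp only [Finset.mem_range, Finset.mem_Ico] at *; omega
      · intro t ht; simp only [Finset.mem_range] at ht; omega
      · intro s hs; simp only [Finset.mem_Ico] at hs; omega
      · intro t ht; rfl
    have hcount : ∏ s ∈ range (M+1), Qc ((2*s+1 : ℕ) : ZMod p) = (-1 : ℤ)^((M+1)/2) := by
      have hIcc : Icc 0 M = range (M+1) := by
        rw [← Finset.Ico_add_one_right_eq_Icc, Nat.Ico_zero_eq_range]
      have := prod_pm_of_sum_eq_zero (range (M+1)) (fun s => Qc ((2*s+1 : ℕ) : ZMod p))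
        (fun s hs => by
          simp only [Finset.mem_range] at hs
          exact hqc_ne (2*s+1) (by omega) (by omega))
        (by
          have h0 := (qc_sums hpM).2 hM2
          rwa [hIcc] at h0)
      rwa [Finset.card_range] at this
    rw [hrefl, Finset.prod_range_mul_prod_Ico _ (by omega), hcount, ← pow_add]
    rw [show ((-1 : ℤ))^((M+1)/2+(M+1)/2) = 1 from Even.neg_one_pow ⟨(M+1)/2, rfl⟩, mul_one]

lemma T_eval {n a : ℕ} (hpn : p = 2*n+1) (hnodd : n % 2 = 1) (ha1 : 1 ≤ a) (ha2 : a ≤ 2*n - 1) :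
    ∑ x ∈ univ.filter (fun x : ZMod p => x ≠ 0 ∧ x ≠ 1), x^n * (1-x)^a
      = if n ≤ a then ((a.choose n : ℕ) : ZMod p) else 0 := by
  classical
  have hn1 : 1 ≤ n := by omega
  have hfull : ∑ x ∈ univ.filter (fun x : ZMod p => x ≠ 0 ∧ x ≠ 1), x^n * (1-x)^a
      = ∑ x : ZMod p, x^n * (1-x)^a := by
    apply Finset.sum_subset (Finset.filter_subset _ _)
    intro x _ hx
    simp only [Finset.mem_filter, Finset.mem_univ, true_and, not_and_or, not_not] at hx
    rcases hx with hx | hx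
    · rw [hx, zero_pow (by omega), zero_mul]
    · rw [hx, sub_self, zero_pow (by omega), mul_zero]
  rw [hfull]
  have hexpand : ∀ x : ZMod p, x^n * (1-x)^a
      = ∑ j ∈ range (a+1), ((-1 : ZMod p))^j * (a.choose j : ZMod p) * x^(n+j) := by
    intro x
    have hb : (1 - x) = (-x) + 1 := by ring
    rw [hb, add_pow]
    rw [Finset.mul_sum]
    refine Finset.sum_congr rfl fun j hj => ?_
    rw [neg_pow]
    ring
  rw [Finset.sum_congr rfl (fun x _ => hexpand x), Finset.sum_comm]
  have hterm : ∀ j ∈ range (a+1),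
      ∑ x : ZMod p, ((-1 : ZMod p))^j * (a.choose j : ZMod p) * x^(n+j)
        = if j = n then ((a.choose n : ℕ) : ZMod p) else 0 := by
    intro j hj
    simp only [Finset.mem_range] at hj
    rw [← Finset.mul_sum]
    have hps := sum_pow_zmod (p := p) (m := n+j) (by omega) (by omega)
    rw [hps]
    by_cases hjn : j = n
    · subst hjn
      rw [if_pos (by omega), if_pos rfl]
      have : ((-1 : ZMod p))^j = -1 := Odd.neg_one_pow (Nat.odd_iff.mpr hnodd)
      rw [this]
      push_cast
      ring
    · rw [if_neg (by omega), if_neg hjn, mul_zero]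
  rw [Finset.sum_congr rfl hterm]
  by_cases hna : n ≤ a
  · rw [if_pos hna, Finset.sum_ite_eq' (range (a+1)) n (fun _ => ((a.choose n : ℕ) : ZMod p)),
      if_pos (by simp; omega)]
  · rw [if_neg hna]
    apply Finset.sum_eq_zero
    intro j hj
    simp only [Finset.mem_range] at hj
    rw [if_neg (by omega)]

end Stmt7Aux

open Polynomial

set_option maxHeartbeats 1000000

/-- Let `p ≡ 3 (mod 4)` be a prime. Then the Legendre symbol
`(R_p/p) = (-1)^{(p-3)/4}`. -/
theorem stmt_7 (p : ℕ) [Fact p.Prime] (n : ℕ)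
    (hcard : p = 2 * n + 1)
    (hp : p % 4 = 3)
    (φ χ : MulChar (ZMod p) ℂ)
    (hφ : φ ^ 2 = 1 ∧ φ ≠ 1)
    (hχ : ∀ ψ : MulChar (ZMod p) ℂ, ψ ∈ Subgroup.zpowers χ)
    (r : ℤ)
    (hr : (∏ k ∈ (Finset.range n).filter (fun k => 0 < k ∧ 2 * k < n),
        (jacobiSum φ (χ ^ k) + jacobiSum φ (χ ^ (-(k : ℤ))))) = (r : ℂ)) :
    legendreSym p r = (-1) ^ ((p - 3) / 4) := by
  classical
  obtain ⟨M, hM⟩ : ∃ M, p = 4*M+3 := ⟨p/4, by omega⟩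
  have hn : n = 2*M+1 := by omega
  have hnodd : n % 2 = 1 := by omega
  have hn1 : 1 ≤ n := by omega
  have hp2n : p - 1 = 2*n := by omega
  have hset : (Finset.range n).filter (fun k => 0 < k ∧ 2 * k < n) = Ioc 0 M := by
    ext a; simp only [Finset.mem_filter, Finset.mem_range, Finset.mem_Ioc]; omega
  rw [hset] at hr
  -- generator of the unit group
  obtain ⟨g, hg⟩ := IsCyclic.exists_generator (α := (ZMod p)ˣ)
  have hgord : orderOf g = p - 1 := by
    rw [orderOf_eq_card_of_forall_mem_zpowers hg, Nat.card_eq_fintype_card, ZMod.card_units]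
  have hexp : ∀ u : (ZMod p)ˣ, ∃ i : ℕ, g ^ i = u := by
    intro u
    have h1 := hg u
    rwa [← mem_powers_iff_mem_zpowers, Submonoid.mem_powers_iff] at h1
  choose e he using hexp
  set ζ : ℂ := χ ((g : (ZMod p)ˣ) : ZMod p) with hζdef
  -- value of χ on units
  have hχx : ∀ u : (ZMod p)ˣ, χ ((u : (ZMod p)ˣ) : ZMod p) = ζ ^ (e u) := by
    intro u
    conv_lhs => rw [← he u]
    rw [Units.val_pow_eq_pow_val, map_pow]
  -- ζ ≠ 0
  have hζinv : ζ * χ (((g⁻¹ : (ZMod p)ˣ) : ZMod p)) = 1 := by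
    rw [hζdef, ← map_mul]
    have : ((g : (ZMod p)ˣ) : ZMod p) * ((g⁻¹ : (ZMod p)ˣ) : ZMod p) = 1 := by
      rw [← Units.val_mul, mul_inv_cancel, Units.val_one]
    rw [this, map_one]
  have hζne : ζ ≠ 0 := left_ne_zero_of_mul_eq_one hζinv
  -- ζ^(p-1) = 1
  have hζpow : ζ ^ (p-1) = 1 := by
    have hg1 : g ^ (p-1) = 1 := by rw [← hgord, pow_orderOf_eq_one]
    rw [hζdef, ← map_pow, ← Units.val_pow_eq_pow_val, hg1, Units.val_one, map_one]
  -- χ^(2n) = 1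
  have hχ2n : χ ^ (2*n) = 1 := by
    apply MulChar.ext
    intro a
    rw [MulChar.pow_apply_coe, MulChar.one_apply_coe, ← map_pow, ← Units.val_pow_eq_pow_val]
    have : a ^ (2*n) = 1 := by
      have := hg a
      rw [← hp2n]
      have hoa : orderOf a ∣ p - 1 := by
        rw [← hgord]
        exact orderOf_dvd_of_mem_zpowers (hg a)
      exact orderOf_dvd_iff_pow_eq_one.mp hoa
    rw [this, Units.val_one, map_one]
  -- evaluation of integer powers of χ at g
  have heval : ∀ j : ℤ, (χ ^ j) ((g : (ZMod p)ˣ) : ZMod p) = ζ ^ j := by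
    intro j
    cases j with
    | ofNat m =>
      rw [Int.ofNat_eq_coe, zpow_natCast, zpow_natCast, MulChar.pow_apply_coe]
    | negSucc m =>
      rw [zpow_negSucc, zpow_negSucc, MulChar.inv_apply']
      have h1 : ((g : (ZMod p)ˣ) : ZMod p)⁻¹ = ((g⁻¹ : (ZMod p)ˣ) : ZMod p) := by
        rw [← Units.val_inv_eq_inv_val]
      rw [h1, MulChar.pow_apply_coe]
      have h2 : χ (((g⁻¹ : (ZMod p)ˣ) : ZMod p)) = ζ⁻¹ :=
        eq_inv_of_mul_eq_one_left (by rw [mul_comm]; exact hζinv)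
      rw [h2, inv_pow]
  -- primitivity of ζ
  have hψ : ∃ ψ : MulChar (ZMod p) ℂ, ∃ ξ : ℂ, IsPrimitiveRoot ξ (p-1) ∧
      ψ ((g : (ZMod p)ˣ) : ZMod p) = ξ := by
    obtain ⟨ξ, hξ⟩ : ∃ ξ : ℂ, IsPrimitiveRoot ξ (p-1) :=
      ⟨_, Complex.isPrimitiveRoot_exp (p-1) (by omega)⟩
    have hξu : IsUnit ξ := hξ.isUnit (by omega)
    set ξu : ℂˣ := hξu.unit with hξudef
    have hξuval : (ξu : ℂ) = ξ := hξu.unit_spec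
    have hξuord : orderOf ξu = p - 1 := by
      rw [← orderOf_units] at *
      rw [hξuval, ← hξ.eq_orderOf]
    have hcong : ∀ a b : ℕ, g ^ a = g ^ b → ξu ^ a = ξu ^ b := by
      intro a b hab
      rw [pow_eq_pow_iff_modEq] at hab ⊢
      rw [hξuord]
      rw [hgord] at hab
      exact hab
    refine ⟨MulChar.ofUnitHom
      { toFun := fun u => ξu ^ (e u)
        map_one' := by
          show ξu ^ (e 1) = 1
          have h1 : g ^ (e 1) = g ^ 0 := by rw [he 1, pow_zero]
          rw [hcong _ _ h1, pow_zero]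
        map_mul' := by
          intro u v
          show ξu ^ (e (u*v)) = ξu ^ (e u) * ξu ^ (e v)
          have h1 : g ^ (e (u*v)) = g ^ (e u + e v) := by
            rw [he (u*v), pow_add, he u, he v]
          rw [hcong _ _ h1, pow_add] }, ξ, hξ, ?_⟩
    rw [MulChar.ofUnitHom_coe]
    show ((ξu ^ (e g) : ℂˣ) : ℂ) = ξ
    have h1 : g ^ (e g) = g ^ 1 := by rw [he g, pow_one]
    have h2 := hcong _ _ h1
    rw [h2, pow_one, hξuval]
  obtain ⟨ψ, ξ, hξ, hψg⟩ := hψ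
  have hζprim : IsPrimitiveRoot ζ (p-1) := by
    obtain ⟨j, hj⟩ := Subgroup.mem_zpowers_iff.mp (hχ ψ)
    refine ⟨hζpow, ?_⟩
    intro l hl
    apply hξ.dvd_of_pow_eq_one
    have h1 : ξ = ζ ^ j := by rw [← hψg, ← hj, heval]
    rw [h1, ← zpow_natCast (ζ ^ j) l]
    rw [← zpow_mul, mul_comm j (l : ℤ), zpow_mul, zpow_natCast, hl, one_zpow]
  -- φ = χ ^ n
  have hφn : φ = χ ^ n := by
    obtain ⟨s, hs⟩ := Subgroup.mem_zpowers_iff.mp (hχ φ)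
    have hφg : φ ((g : (ZMod p)ˣ) : ZMod p) = ζ ^ s := by rw [← hs, heval]
    have hφg2 : (φ ((g : (ZMod p)ˣ) : ZMod p))^2 = 1 := by
      rw [← MulChar.pow_apply_coe, hφ.1, MulChar.one_apply_coe]
    have hφgne : φ ((g : (ZMod p)ˣ) : ZMod p) ≠ 1 := by
      intro hone
      apply hφ.2
      apply MulChar.ext
      intro a
      obtain ⟨i, hi⟩ : ∃ i : ℕ, g ^ i = a := by
        have h1 := hg a
        rwa [← mem_powers_iff_mem_zpowers, Submonoid.mem_powers_iff] at h1
      rw [MulChar.one_apply_coe, ← hi, Units.val_pow_eq_pow_val, map_pow, hone, one_pow]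
    have hφgval : φ ((g : (ZMod p)ˣ) : ZMod p) = -1 := by
      have h7 := hφg2
      rw [pow_two] at h7
      rcases mul_self_eq_one_iff.mp h7 with h | h
      · exact absurd h hφgne
      · exact h
    have hζn : ζ ^ (n : ℤ) = -1 := by
      have h2 : (ζ ^ n)^2 = 1 := by
        rw [← pow_mul, show n*2 = p-1 from by omega, hζpow]
      have h3 : ζ ^ n ≠ 1 := hζprim.pow_ne_one_of_pos_of_lt (by omega) (by omega)
      rw [pow_two] at h2
      rcases mul_self_eq_one_iff.mp h2 with h | h
      · exact absurd h h3
      · rw [zpow_natCast]; exact h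
    have hdvd : ((p:ℤ) - 1) ∣ (s - n) := by
      have h6 : ζ ^ s = -1 := by rw [← hφg, hφgval]
      have h4 : ζ ^ (s - (n:ℤ)) = 1 := by
        rw [zpow_sub₀ hζne, h6, hζn]
        norm_num
      have := (hζprim.zpow_eq_one_iff_dvd (s - n)).mp h4
      rwa [Nat.cast_sub (by omega), Nat.cast_one] at this
    obtain ⟨t, ht⟩ := hdvd
    have hs2 : s = (n : ℤ) + ((p:ℤ)-1) * t := by linarith
    rw [← hs, hs2, zpow_add, zpow_natCast, zpow_mul]
    have h5 : χ ^ ((p:ℤ)-1) = 1 := by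
      have : ((p:ℤ)-1) = ((2*n : ℕ) : ℤ) := by push_cast; omega
      rw [this, zpow_natCast, hχ2n]
    rw [h5, one_zpow, mul_one]
  -- discrete log on ZMod p
  set gz : ZMod p := ((g : (ZMod p)ˣ) : ZMod p) with hgz
  set E : ZMod p → ℕ := fun x => if h : x = 0 then 0 else e (Units.mk0 x h) with hE
  have hEval : ∀ x : ZMod p, x ≠ 0 → gz ^ (E x) = x := by
    intro x hx
    rw [hE]; dsimp only; rw [dif_neg hx]
    have h1 := he (Units.mk0 x hx)
    rw [hgz, ← Units.val_pow_eq_pow_val, h1, Units.val_mk0]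
  have hχE : ∀ x : ZMod p, x ≠ 0 → χ x = ζ ^ (E x) := by
    intro x hx
    conv_lhs => rw [← hEval x hx]
    rw [hgz, map_pow]
  set s0 : Finset (ZMod p) := univ.filter (fun x : ZMod p => x ≠ 0 ∧ x ≠ 1) with hs0
  set A : ℕ → Polynomial ℤ :=
    fun k => ∑ x ∈ s0, (Polynomial.X : Polynomial ℤ)^(n * E x + k * E (1 - x)) with hA
  -- evaluation of A k at ζ gives the Jacobi sum
  have hAζ : ∀ k : ℕ, Polynomial.aeval ζ (A k) = jacobiSum φ (χ ^ k) := by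
    intro k
    rw [jacobiSum, hA]; dsimp only
    rw [map_sum]
    have hres : ∑ x : ZMod p, φ x * (χ ^ k) (1 - x) = ∑ x ∈ s0, φ x * (χ ^ k) (1 - x) := by
      symm
      apply Finset.sum_subset (Finset.filter_subset _ _)
      intro x _ hx
      simp only [hs0, Finset.mem_filter, Finset.mem_univ, true_and, not_and_or, not_not] at hx
      rcases hx with hx | hx
      · rw [hx, MulChar.map_zero, zero_mul]
      · rw [hx, sub_self, MulChar.map_zero, mul_zero]
    rw [hres]
    refine Finset.sum_congr rfl fun x hx => ?_
    rw [hs0] at hx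
    simp only [Finset.mem_filter, Finset.mem_univ, true_and] at hx
    obtain ⟨hx0, hx1⟩ := hx
    have hx1' : (1 : ZMod p) - x ≠ 0 := sub_ne_zero_of_ne (Ne.symm hx1)
    rw [map_pow, Polynomial.aeval_X, pow_add]
    have hφx : φ x = ζ ^ (n * E x) := by
      rw [hφn, MulChar.pow_apply' χ (by omega : n ≠ 0), hχE x hx0, ← pow_mul, mul_comm (E x) n]
    have hχkx : (χ ^ k) (1 - x) = ζ ^ (k * E (1 - x)) := by
      rcases Nat.eq_zero_or_pos k with h0 | hpos
      · subst h0
        rw [pow_zero, Nat.zero_mul, pow_zero, MulChar.one_apply (isUnit_iff_ne_zero.mpr hx1')]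
      · rw [MulChar.pow_apply' χ (by omega : k ≠ 0), hχE _ hx1', ← pow_mul,
          mul_comm (E (1-x)) k]
    rw [hφx, hχkx]
  -- evaluation of A k at g
  have hAg : ∀ k : ℕ, Polynomial.aeval gz (A k) = ∑ x ∈ s0, x^n * (1-x)^k := by
    intro k
    rw [hA]; dsimp only
    rw [map_sum]
    refine Finset.sum_congr rfl fun x hx => ?_
    rw [hs0] at hx
    simp only [Finset.mem_filter, Finset.mem_univ, true_and] at hx
    obtain ⟨hx0, hx1⟩ := hx
    have hx1' : (1 : ZMod p) - x ≠ 0 := sub_ne_zero_of_ne (Ne.symm hx1)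
    rw [map_pow, Polynomial.aeval_X, pow_add, mul_comm n (E x), pow_mul, hEval x hx0,
      mul_comm k (E (1-x)), pow_mul, hEval _ hx1']
  -- rewrite hr using natural number powers
  have hzpow : ∀ k : ℕ, k ≤ 2*n → χ ^ (-(k:ℤ)) = χ ^ ((2*n - k : ℕ)) := by
    intro k hk
    have h1 : χ ^ ((2*n-k : ℕ)) * χ ^ k = 1 := by
      rw [← pow_add, show 2*n-k+k = 2*n from by omega, hχ2n]
    rw [zpow_neg, zpow_natCast]
    exact (eq_inv_of_mul_eq_one_left h1).symm
  set Q : Polynomial ℤ := ∏ k ∈ Ioc 0 M, (A k + A (2*n - k)) with hQ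
  have hQζ : Polynomial.aeval ζ Q = (r : ℂ) := by
    rw [hQ, map_prod, ← hr]
    refine Finset.prod_congr rfl fun k hk => ?_
    simp only [Finset.mem_Ioc] at hk
    rw [map_add, hAζ k, hAζ (2*n-k), ← hzpow k (by omega)]
  -- ζ is integral over ℤ
  have hint : IsIntegral ℤ ζ := by
    refine ⟨Polynomial.X ^ (p-1) - Polynomial.C 1, Polynomial.monic_X_pow_sub_C 1 (by omega), ?_⟩
    rw [Polynomial.eval₂_sub, Polynomial.eval₂_pow, Polynomial.eval₂_X, Polynomial.eval₂_C]
    rw [hζpow]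
    simp
  have hdvd : minpoly ℤ ζ ∣ (Q - Polynomial.C r) := by
    apply minpoly.isIntegrallyClosed_dvd hint
    rw [map_sub, hQζ, Polynomial.aeval_C]
    simp
  rw [← Polynomial.cyclotomic_eq_minpoly hζprim (by omega : 0 < p - 1)] at hdvd
  obtain ⟨B, hB⟩ := hdvd
  -- g (as element of ZMod p) is a primitive root
  have hgzord : orderOf gz = p - 1 := by
    rw [hgz, orderOf_units, hgord]
  have hgzprim : IsPrimitiveRoot gz (p-1) := by
    refine ⟨?_, fun l hl => ?_⟩
    · rw [← hgzord, pow_orderOf_eq_one]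
    · rw [← hgzord]; exact orderOf_dvd_of_pow_eq_one hl
  have hroot : Polynomial.aeval gz (Polynomial.cyclotomic (p-1) ℤ) = 0 := by
    rw [Polynomial.aeval_def, Polynomial.eval₂_eq_eval_map, Polynomial.map_cyclotomic]
    exact hgzprim.isRoot_cyclotomic (by omega)
  have hcongr : ((r : ℤ) : ZMod p) = Polynomial.aeval gz Q := by
    have h1 := congrArg (Polynomial.aeval gz) hB
    rw [map_sub, map_mul, hroot, zero_mul, Polynomial.aeval_C] at h1
    have h2 : Polynomial.aeval gz Q - algebraMap ℤ (ZMod p) r = 0 := h1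
    rw [sub_eq_zero] at h2
    rw [h2]
    simp
  -- compute the product over ZMod p
  have hT : ∀ k ∈ Ioc 0 M, Polynomial.aeval gz (A k + A (2*n - k))
      = (((2*n - k).choose n : ℕ) : ZMod p) := by
    intro k hk
    simp only [Finset.mem_Ioc] at hk
    rw [map_add, hAg k, hAg (2*n-k), hs0]
    rw [Stmt7Aux.T_eval hcard hnodd (by omega) (by omega), Stmt7Aux.T_eval hcard hnodd (by omega) (by omega)]
    rw [if_neg (by omega), if_pos (by omega), zero_add]
  have hrval : ((r : ℤ) : ZMod p) = ∏ k ∈ Ioc 0 M, (((2*n - k).choose n : ℕ) : ZMod p) := by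
    rw [hcongr, hQ, map_prod]
    exact Finset.prod_congr rfl hT
  -- conclude with the Legendre symbol
  show quadraticChar (ZMod p) ((r : ℤ) : ZMod p) = (-1) ^ ((p-3)/4)
  rw [hrval, map_prod, Stmt7Aux.qc_main hM hn, show (p-3)/4 = M from by omega]
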